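/- Let D ∈ ℝ^{n×n} be the lower-triangular matrix of ones (D[i,j] = 1 if i ≥ j, else 0), and let Γ = {a₁ < a₂ < … < a_p} ⊆ {1,…,n}. Then D_Γᵀ D_Γ is invertible and its inverse is the symmetric tridiagonal matrix with diagonal entries (c₁, c₁+c₂, …, c_{p−1}+c_p) and off-diagonal entries (−c₁, …, −c_{p−1}), where c_i = 1/(a_{i+1} − a_i) for i < p and c_p = 1/(n + 1 − a_p). -/

import Mathlib

open Finset Matrix

/-- Closed-form tridiagonal inverse of the Gram matrix `D_Γᵀ D_Γ`, where `D` is the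
lower-triangular matrix of ones and `Γ = {a₀ < a₁ < … < a_{p−1}}` indexes columns
(0-indexed; the paper's `c_i = 1/(a_{i+1} − a_i)` and `c_p = 1/(n + 1 − a_p)` in
1-indexed notation). -/
theorem gram_of_cumsum_matrix_inverse (n p : ℕ) (hp : 0 < p)
    (D : Matrix (Fin n) (Fin n) ℝ)
    (hD : ∀ i j, D i j = if (j : ℕ) ≤ (i : ℕ) then 1 else 0)
    (a : Fin p → Fin n) (ha : StrictMono a)
    (DΓ : Matrix (Fin n) (Fin p) ℝ) (hDΓ : ∀ i l, DΓ i l = D i (a l))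
    (G : Matrix (Fin p) (Fin p) ℝ) (hG : G = DΓᵀ * DΓ)
    (c : Fin p → ℝ)
    (hc : ∀ i : Fin p, c i =
        if h : (i : ℕ) + 1 < p then 1 / (((a ⟨(i : ℕ) + 1, h⟩ : ℕ) : ℝ) - ((a i : ℕ) : ℝ))
        else 1 / ((n : ℝ) - ((a i : ℕ) : ℝ)))
    (M : Matrix (Fin p) (Fin p) ℝ)
    (hM : ∀ l l' : Fin p, M l l' =
        if (l : ℕ) = (l' : ℕ) then
          (if h : 1 ≤ (l : ℕ) then
              c ⟨(l : ℕ) - 1, Nat.lt_of_le_of_lt (Nat.sub_le _ _) l.isLt⟩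
            else 0) + c l
        else if (l : ℕ) + 1 = (l' : ℕ) then -(c l)
        else if (l' : ℕ) + 1 = (l : ℕ) then -(c l')
        else 0) :
    G * M = 1 ∧ M * G = 1 := by
  -- value of the Gram matrix
  have hGval : ∀ l l' : Fin p, G l l' = (n : ℝ) - ((max (a l : ℕ) (a l' : ℕ) : ℕ) : ℝ) := by
    intro l l'
    have hmlt : max (a l : ℕ) (a l' : ℕ) < n := max_lt (a l).isLt (a l').isLt
    rw [hG, Matrix.mul_apply]
    have hterm : ∀ i : Fin n, DΓᵀ l i * DΓ i l' =
        if max (a l : ℕ) (a l' : ℕ) ≤ (i : ℕ) then (1 : ℝ) else 0 := by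
      intro i
      rw [Matrix.transpose_apply, hDΓ, hDΓ, hD, hD]
      by_cases h1 : (a l : ℕ) ≤ (i : ℕ) <;> by_cases h2 : (a l' : ℕ) ≤ (i : ℕ) <;>
        simp [h1, h2, max_le_iff]
    rw [Finset.sum_congr rfl fun i _ => hterm i, Finset.sum_boole]
    have hfil : Finset.filter (fun i : Fin n => max (a l : ℕ) (a l' : ℕ) ≤ (i : ℕ)) Finset.univ
        = Finset.Ici (⟨max (a l : ℕ) (a l' : ℕ), hmlt⟩ : Fin n) := by
      ext i
      simp only [Finset.mem_filter, Finset.mem_univ, true_and, Finset.mem_Ici, Fin.le_def]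
    rw [hfil, Fin.card_Ici, Nat.cast_sub hmlt.le]
  -- explicit values of c
  have hc' : ∀ (i j : Fin p), (i : ℕ) + 1 = (j : ℕ) →
      c i = 1 / (((a j : ℕ) : ℝ) - ((a i : ℕ) : ℝ)) := by
    intro i j h
    have hlt : (i : ℕ) + 1 < p := h ▸ j.isLt
    rw [hc i, dif_pos hlt]
    have : (⟨(i : ℕ) + 1, hlt⟩ : Fin p) = j := Fin.ext h
    rw [this]
  have hclast : ∀ i : Fin p, ¬ ((i : ℕ) + 1 < p) →
      c i = 1 / ((n : ℝ) - ((a i : ℕ) : ℝ)) := by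
    intro i h
    rw [hc i, dif_neg h]
  -- monotonicity facts
  have hAmono : ∀ {i j : Fin p}, (i : ℕ) ≤ (j : ℕ) → (a i : ℕ) ≤ (a j : ℕ) := by
    intro i j h
    exact Fin.le_def.mp (ha.monotone (Fin.le_def.mpr h))
  have hAlt : ∀ {i j : Fin p}, (i : ℕ) < (j : ℕ) → ((a i : ℕ) : ℝ) < ((a j : ℕ) : ℝ) := by
    intro i j h
    exact_mod_cast ha (Fin.lt_def.mpr h)
  have hAn : ∀ i : Fin p, ((a i : ℕ) : ℝ) < (n : ℝ) := by
    intro i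
    exact_mod_cast (a i).isLt
  have key : G * M = 1 := by
    ext l K
    rw [Matrix.mul_apply, Matrix.one_apply]
    have hsplit : ∀ l' : Fin p,
        G l l' * M l' K =
          ((if l' = K then G l l' * M K K else 0)
          + (if (l' : ℕ) + 1 = (K : ℕ) then G l l' * (-(c l')) else 0))
          + (if (K : ℕ) + 1 = (l' : ℕ) then G l l' * (-(c K)) else 0) := by
      intro l'
      by_cases h1 : (l' : ℕ) = (K : ℕ)
      · have hK : l' = K := Fin.ext h1
        subst hK
        rw [hM]
        simp
      · rw [hM, if_neg h1, if_neg (fun h : l' = K => h1 (by rw [h]))]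
        by_cases h2 : (l' : ℕ) + 1 = (K : ℕ)
        · have h3 : ¬ ((K : ℕ) + 1 = (l' : ℕ)) := by omega
          simp [h2, h3]
        · by_cases h3 : (K : ℕ) + 1 = (l' : ℕ)
          · simp [h2, h3]
          · simp [h2, h3]
    rw [Finset.sum_congr rfl fun l' _ => hsplit l', Finset.sum_add_distrib,
      Finset.sum_add_distrib, Finset.sum_ite_eq' Finset.univ K (fun l' => G l l' * M K K),
      if_pos (Finset.mem_univ K)]
    by_cases hK1 : 1 ≤ (K : ℕ)
    · -- K ≥ 1 : there is a previous index K1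
      have hK1lt : (K : ℕ) - 1 < p := Nat.lt_of_le_of_lt (Nat.sub_le _ _) K.isLt
      set K1 : Fin p := ⟨(K : ℕ) - 1, hK1lt⟩ with hK1d
      have hK1val : (K1 : ℕ) = (K : ℕ) - 1 := rfl
      have hS2 : (∑ x : Fin p, if (x : ℕ) + 1 = (K : ℕ) then G l x * (-(c x)) else 0)
          = G l K1 * (-(c K1)) := by
        have hcond : ∀ x : Fin p, ((x : ℕ) + 1 = (K : ℕ)) ↔ x = K1 := by
          intro x
          rw [Fin.ext_iff, hK1val]
          omega
        rw [Finset.sum_congr rfl (fun x _ => if_congr (hcond x) rfl rfl),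
          Finset.sum_ite_eq' Finset.univ K1 (fun x => G l x * (-(c x))),
          if_pos (Finset.mem_univ K1)]
      rw [hS2]
      have hcK1 : c K1 = 1 / (((a K : ℕ) : ℝ) - ((a K1 : ℕ) : ℝ)) := by
        refine hc' K1 K ?_
        rw [hK1val]; omega
      have hMKK : M K K = c K1 + c K := by
        rw [hM, if_pos rfl, dif_pos hK1]
      have hd1 : ((a K : ℕ) : ℝ) - ((a K1 : ℕ) : ℝ) ≠ 0 := by
        have : (K1 : ℕ) < (K : ℕ) := by rw [hK1val]; omega
        exact sub_ne_zero.2 (hAlt this).ne'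
      by_cases hK2 : (K : ℕ) + 1 < p
      · -- interior column
        set K2 : Fin p := ⟨(K : ℕ) + 1, hK2⟩ with hK2d
        have hK2val : (K2 : ℕ) = (K : ℕ) + 1 := rfl
        have hS3 : (∑ x : Fin p, if (K : ℕ) + 1 = (x : ℕ) then G l x * (-(c K)) else 0)
            = G l K2 * (-(c K)) := by
          have hcond : ∀ x : Fin p, ((K : ℕ) + 1 = (x : ℕ)) ↔ x = K2 := by
            intro x
            rw [Fin.ext_iff, hK2val]
            omega
          rw [Finset.sum_congr rfl (fun x _ => if_congr (hcond x) rfl rfl),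
            Finset.sum_ite_eq' Finset.univ K2 (fun x => G l x * (-(c K))),
            if_pos (Finset.mem_univ K2)]
        rw [hS3]
        have hcK : c K = 1 / (((a K2 : ℕ) : ℝ) - ((a K : ℕ) : ℝ)) := by
          exact hc' K K2 hK2val.symm
        have hd2 : ((a K2 : ℕ) : ℝ) - ((a K : ℕ) : ℝ) ≠ 0 := by
          have : (K : ℕ) < (K2 : ℕ) := by rw [hK2val]; omega
          exact sub_ne_zero.2 (hAlt this).ne'
        rcases Nat.lt_trichotomy (l : ℕ) (K : ℕ) with h | h | h
        · -- l < K
          have hm1 : max (a l : ℕ) (a K : ℕ) = (a K : ℕ) := max_eq_right (hAmono h.le)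
          have hm2 : max (a l : ℕ) (a K1 : ℕ) = (a K1 : ℕ) :=
            max_eq_right (hAmono (by rw [hK1val]; omega))
          have hm3 : max (a l : ℕ) (a K2 : ℕ) = (a K2 : ℕ) :=
            max_eq_right (hAmono (by rw [hK2val]; omega))
          rw [hGval l K, hGval l K1, hGval l K2, hm1, hm2, hm3, hMKK, hcK1, hcK,
            if_neg (fun e : l = K => absurd (congrArg Fin.val e) (by omega))]
          field_simp
          ring
        · -- l = K
          have hlK : l = K := Fin.ext h
          subst hlK
          have hm1 : max (a l : ℕ) (a l : ℕ) = (a l : ℕ) := max_self _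
          have hm2 : max (a l : ℕ) (a K1 : ℕ) = (a l : ℕ) :=
            max_eq_left (hAmono (by rw [hK1val]; omega))
          have hm3 : max (a l : ℕ) (a K2 : ℕ) = (a K2 : ℕ) :=
            max_eq_right (hAmono (by rw [hK2val]; omega))
          rw [hGval l l, hGval l K1, hGval l K2, hm1, hm2, hm3, hMKK, hcK1, hcK, if_pos rfl]
          field_simp
          ring
        · -- K < l
          have hm1 : max (a l : ℕ) (a K : ℕ) = (a l : ℕ) := max_eq_left (hAmono h.le)
          have hm2 : max (a l : ℕ) (a K1 : ℕ) = (a l : ℕ) :=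
            max_eq_left (hAmono (by rw [hK1val]; omega))
          have hm3 : max (a l : ℕ) (a K2 : ℕ) = (a l : ℕ) :=
            max_eq_left (hAmono (by rw [hK2val]; omega))
          rw [hGval l K, hGval l K1, hGval l K2, hm1, hm2, hm3, hMKK,
            if_neg (fun e : l = K => absurd (congrArg Fin.val e) (by omega))]
          ring
      · -- last column : K = p - 1
        have hS3 : (∑ x : Fin p, if (K : ℕ) + 1 = (x : ℕ) then G l x * (-(c K)) else 0) = 0 :=
          Finset.sum_eq_zero fun x _ => if_neg (by have := x.isLt; omega)
        rw [hS3]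
        have hcK : c K = 1 / ((n : ℝ) - ((a K : ℕ) : ℝ)) := hclast K hK2
        have hdn : (n : ℝ) - ((a K : ℕ) : ℝ) ≠ 0 := sub_ne_zero.2 (hAn K).ne'
        rcases Nat.lt_trichotomy (l : ℕ) (K : ℕ) with h | h | h
        · -- l < K
          have hm1 : max (a l : ℕ) (a K : ℕ) = (a K : ℕ) := max_eq_right (hAmono h.le)
          have hm2 : max (a l : ℕ) (a K1 : ℕ) = (a K1 : ℕ) :=
            max_eq_right (hAmono (by rw [hK1val]; omega))
          rw [hGval l K, hGval l K1, hm1, hm2, hMKK, hcK1, hcK,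
            if_neg (fun e : l = K => absurd (congrArg Fin.val e) (by omega))]
          field_simp
          ring
        · -- l = K
          have hlK : l = K := Fin.ext h
          subst hlK
          have hm1 : max (a l : ℕ) (a l : ℕ) = (a l : ℕ) := max_self _
          have hm2 : max (a l : ℕ) (a K1 : ℕ) = (a l : ℕ) :=
            max_eq_left (hAmono (by rw [hK1val]; omega))
          rw [hGval l l, hGval l K1, hm1, hm2, hMKK, hcK1, hcK, if_pos rfl]
          field_simp
          ring
        · -- K < l : impossible since K = p - 1
          exfalso
          have := l.isLt
          omega
    · -- K = 0 : no previous index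
      have hKval : (K : ℕ) = 0 := by omega
      have hS2 : (∑ x : Fin p, if (x : ℕ) + 1 = (K : ℕ) then G l x * (-(c x)) else 0) = 0 :=
        Finset.sum_eq_zero fun x _ => if_neg (by omega)
      rw [hS2]
      have hMKK : M K K = c K := by
        rw [hM, if_pos rfl, dif_neg hK1, zero_add]
      by_cases hK2 : (K : ℕ) + 1 < p
      · set K2 : Fin p := ⟨(K : ℕ) + 1, hK2⟩ with hK2d
        have hK2val : (K2 : ℕ) = (K : ℕ) + 1 := rfl
        have hS3 : (∑ x : Fin p, if (K : ℕ) + 1 = (x : ℕ) then G l x * (-(c K)) else 0)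
            = G l K2 * (-(c K)) := by
          have hcond : ∀ x : Fin p, ((K : ℕ) + 1 = (x : ℕ)) ↔ x = K2 := by
            intro x
            rw [Fin.ext_iff, hK2val]
            omega
          rw [Finset.sum_congr rfl (fun x _ => if_congr (hcond x) rfl rfl),
            Finset.sum_ite_eq' Finset.univ K2 (fun x => G l x * (-(c K))),
            if_pos (Finset.mem_univ K2)]
        rw [hS3]
        have hcK : c K = 1 / (((a K2 : ℕ) : ℝ) - ((a K : ℕ) : ℝ)) := hc' K K2 hK2val.symm
        have hd2 : ((a K2 : ℕ) : ℝ) - ((a K : ℕ) : ℝ) ≠ 0 := by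
          have : (K : ℕ) < (K2 : ℕ) := by rw [hK2val]; omega
          exact sub_ne_zero.2 (hAlt this).ne'
        rcases Nat.eq_zero_or_pos (l : ℕ) with h | h
        · -- l = K = 0
          have hlK : l = K := Fin.ext (by omega)
          subst hlK
          have hm1 : max (a l : ℕ) (a l : ℕ) = (a l : ℕ) := max_self _
          have hm3 : max (a l : ℕ) (a K2 : ℕ) = (a K2 : ℕ) :=
            max_eq_right (hAmono (by rw [hK2val]; omega))
          rw [hGval l l, hGval l K2, hm1, hm3, hMKK, hcK, if_pos rfl]
          field_simp
          ring
        · -- K < l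
          have hm1 : max (a l : ℕ) (a K : ℕ) = (a l : ℕ) := max_eq_left (hAmono (by omega))
          have hm3 : max (a l : ℕ) (a K2 : ℕ) = (a l : ℕ) :=
            max_eq_left (hAmono (by rw [hK2val]; omega))
          rw [hGval l K, hGval l K2, hm1, hm3, hMKK,
            if_neg (fun e : l = K => absurd (congrArg Fin.val e) (by omega))]
          ring
      · -- p = 1
        have hS3 : (∑ x : Fin p, if (K : ℕ) + 1 = (x : ℕ) then G l x * (-(c K)) else 0) = 0 :=
          Finset.sum_eq_zero fun x _ => if_neg (by have := x.isLt; omega)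
        rw [hS3]
        have hcK : c K = 1 / ((n : ℝ) - ((a K : ℕ) : ℝ)) := hclast K hK2
        have hdn : (n : ℝ) - ((a K : ℕ) : ℝ) ≠ 0 := sub_ne_zero.2 (hAn K).ne'
        have hlK : l = K := Fin.ext (by have := l.isLt; omega)
        subst hlK
        have hm1 : max (a l : ℕ) (a l : ℕ) = (a l : ℕ) := max_self _
        rw [hGval l l, hm1, hMKK, hcK, if_pos rfl]
        field_simp
        ring
  exact ⟨key, mul_eq_one_comm.mp key⟩
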